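/- For a random variable X on the unit sphere S^{q-1} with distribution F, a bounded spherical distance d with supremum d_sup, and a point x, if 0 < δ₁ < δ₂ < d_sup, then the local depth LD^{δ₁}(x;F) = d_sup − E[d(x,X) | d(x,X) ≤ δ₁] is at least LD^{δ₂}(x;F) = d_sup − E[d(x,X) | d(x,X) ≤ δ₂], i.e. local depth is monotonically non-increasing in the locality parameter δ. -/

import Mathlib

open MeasureTheory

/-- Local depth `LD^δ(x;F) = d_sup − E[d(x,X) | d(x,X) ≤ δ]` (here `Z ω = d(x, X ω)`)
is monotonically non-increasing in the locality parameter `δ`. -/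
theorem local_depth_antitone_in_delta
    {Ω : Type*} [MeasurableSpace Ω] (μ : Measure Ω) [IsProbabilityMeasure μ]
    (Z : Ω → ℝ) (hZmeas : Measurable Z) (hZ0 : ∀ ω, 0 ≤ Z ω)
    (dsup : ℝ) (hZb : ∀ ω, Z ω ≤ dsup)
    (δ₁ δ₂ : ℝ) (h0 : 0 < δ₁) (h12 : δ₁ < δ₂) (h2 : δ₂ < dsup)
    (hpos : 0 < μ {ω | Z ω ≤ δ₁}) :
    dsup - (∫ ω in {ω | Z ω ≤ δ₂}, Z ω ∂μ) / (μ {ω | Z ω ≤ δ₂}).toReal ≤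
      dsup - (∫ ω in {ω | Z ω ≤ δ₁}, Z ω ∂μ) / (μ {ω | Z ω ≤ δ₁}).toReal := by
  set A : Set Ω := {ω | Z ω ≤ δ₁} with hA
  set B : Set Ω := {ω | Z ω ≤ δ₂} with hB
  have hAm : MeasurableSet A := hZmeas measurableSet_Iic
  have hBm : MeasurableSet B := hZmeas measurableSet_Iic
  have hAB : A ⊆ B := fun ω hω => le_trans hω h12.le
  have hZint : Integrable Z μ := by
    refine (integrable_const dsup).mono' hZmeas.aestronglyMeasurable ?_
    exact ae_of_all _ fun ω => by rw [Real.norm_eq_abs, abs_of_nonneg (hZ0 ω)]; exact hZb ω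
  have hIA : IntegrableOn Z A μ := hZint.integrableOn
  have hIBA : IntegrableOn Z (B \ A) μ := hZint.integrableOn
  have haT : μ A ≠ ⊤ := measure_ne_top μ A
  have hbT : μ B ≠ ⊤ := measure_ne_top μ B
  set a : ℝ := (μ A).toReal with ha
  set b : ℝ := (μ B).toReal with hb
  set c : ℝ := (μ (B \ A)).toReal with hc
  have hapos : 0 < a := ENNReal.toReal_pos hpos.ne' haT
  have hcnn : 0 ≤ c := ENNReal.toReal_nonneg
  have hbac : b = a + c := by
    rw [ha, hc, ← ENNReal.toReal_add haT (measure_ne_top _ _)]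
    congr 1
    rw [measure_add_diff hAm.nullMeasurableSet B, Set.union_eq_self_of_subset_left hAB]
  have hbpos : 0 < b := by rw [hbac]; linarith
  -- split the integral over B
  have hsplit : (∫ ω in B, Z ω ∂μ) = (∫ ω in A, Z ω ∂μ) + ∫ ω in B \ A, Z ω ∂μ := by
    rw [← setIntegral_union disjoint_sdiff_self_right (hBm.diff hAm) hIA hIBA,
      Set.union_diff_cancel hAB]
  -- bound on A: integral ≤ δ₁ * a
  have hAup : (∫ ω in A, Z ω ∂μ) ≤ δ₁ * a := by
    calc (∫ ω in A, Z ω ∂μ) ≤ ∫ _ in A, δ₁ ∂μ := by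
          refine setIntegral_mono_on hIA (integrableOn_const (measure_ne_top μ A))
            hAm fun ω hω => hω
      _ = δ₁ * a := by rw [setIntegral_const, smul_eq_mul, mul_comm]; rfl
  -- bound on B \ A: integral ≥ δ₁ * c
  have hBAlow : δ₁ * c ≤ ∫ ω in B \ A, Z ω ∂μ := by
    calc δ₁ * c = ∫ _ in B \ A, δ₁ ∂μ := by rw [setIntegral_const, smul_eq_mul, mul_comm]; rfl
      _ ≤ ∫ ω in B \ A, Z ω ∂μ := by
          refine setIntegral_mono_on (integrableOn_const (measure_ne_top μ _))
            hIBA (hBm.diff hAm) fun ω hω => ?_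
          exact le_of_not_ge hω.2
  have key : (∫ ω in A, Z ω ∂μ) / a ≤ (∫ ω in B, Z ω ∂μ) / b := by
    rw [div_le_div_iff₀ hapos hbpos, hsplit, hbac]
    nlinarith [hAup, hBAlow, hapos.le, hcnn]
  linarith [key]
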